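/- With R^{[B]}_{j+1/2, m+1/2} as above and 0 ≤ j ≤ 2m, one has R^{[B]}_{j+1/2, m+1/2}(τ, v−τ) = −e^{πi(2m+1)(τ−2v)} R^{[B]}_{j+1/2, m+1/2}(τ, v) + 2 e^{−πiτ(j+1/2)²/(2m+1) + 2πiτ(j+1/2)} e^{−2πi(j+1/2)v}. -/

import Mathlib

noncomputable section

open Complex

/-- Zwegers-type error function `E(x) = 2∫₀ˣ e^{−πu²} du`. -/
def Efun (x : ℝ) : ℝ := 2 * ∫ u in (0 : ℝ)..x, Real.exp (-Real.pi * u ^ 2)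

/-- The Zwegers-type function `R^{[B]}_{j+1/2, m+1/2}(τ,v)`: the sum over half-integers
`n ≡ j + 1/2 mod (2m+1)`, parametrized by `n = j + 1/2 + (2m+1)k`, `k ∈ ℤ`. -/
def RB (m : ℕ) (j : ℤ) (τ v : ℂ) : ℂ :=
  ∑' k : ℤ,
    (-1 : ℂ) ^ ((2 * (m : ℤ) + 1) * k) *
      (((Real.sign ((j : ℝ) + 1 / 2 + (2 * (m : ℝ) + 1) * (k : ℝ)) -
          Efun ((((j : ℝ) + 1 / 2 + (2 * (m : ℝ) + 1) * (k : ℝ)) +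
              (2 * (m : ℝ) + 1) * (v.im / τ.im)) *
            Real.sqrt (τ.im / ((m : ℝ) + 1 / 2)))) : ℝ) : ℂ) *
      Complex.exp (-(Real.pi : ℂ) * I * ((j : ℂ) + 1 / 2 + (2 * (m : ℂ) + 1) * (k : ℂ)) ^ 2 * τ /
          (2 * (m : ℂ) + 1) -
        2 * (Real.pi : ℂ) * I * ((j : ℂ) + 1 / 2 + (2 * (m : ℂ) + 1) * (k : ℂ)) * v)


open MeasureTheory Set

lemma gauss_integrable : Integrable (fun u : ℝ => Real.exp (-Real.pi * u ^ 2)) := by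
  simpa using integrable_exp_neg_mul_sq Real.pi_pos

lemma gauss_Ioi_zero : ∫ u in Ioi (0:ℝ), Real.exp (-Real.pi * u ^ 2) = 1 / 2 := by
  rw [integral_gaussian_Ioi, div_self Real.pi_ne_zero, Real.sqrt_one]

lemma Efun_neg (x : ℝ) : Efun (-x) = -Efun x := by
  unfold Efun
  have h2 := intervalIntegral.integral_comp_neg (a := (0:ℝ)) (b := -x)
      (fun s => Real.exp (-Real.pi * s ^ 2))
  simp only [neg_neg, neg_zero, neg_sq] at h2
  rw [h2, intervalIntegral.integral_symm]
  ring

lemma Ioi_split {x : ℝ} (hx : 0 ≤ x) :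
    (∫ u in Ioc (0:ℝ) x, Real.exp (-Real.pi * u ^ 2))
      + ∫ u in Ioi x, Real.exp (-Real.pi * u ^ 2)
      = ∫ u in Ioi (0:ℝ), Real.exp (-Real.pi * u ^ 2) := by
  rw [← setIntegral_union (Ioc_disjoint_Ioi le_rfl) measurableSet_Ioi
    gauss_integrable.integrableOn gauss_integrable.integrableOn, Ioc_union_Ioi_eq_Ioi hx]

lemma tail_nonneg (x : ℝ) : 0 ≤ ∫ u in Ioi x, Real.exp (-Real.pi * u ^ 2) :=
  setIntegral_nonneg measurableSet_Ioi (fun _ _ => (Real.exp_pos _).le)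

lemma tail_le {x : ℝ} (hx : 0 ≤ x) :
    ∫ u in Ioi x, Real.exp (-Real.pi * u ^ 2) ≤ Real.exp (-Real.pi * x ^ 2) * (1 / 2) := by
  have hmp := (measurePreserving_add_right (volume : Measure ℝ) x).setIntegral_preimage_emb
    (measurableEmbedding_addRight x) (fun u => Real.exp (-Real.pi * u ^ 2)) (Ioi x)
  have hpre : (fun u : ℝ => u + x) ⁻¹' Ioi x = Ioi 0 := by
    ext u; simp
  rw [← hmp, hpre]
  have : ∫ u in Ioi (0:ℝ), Real.exp (-Real.pi * (u + x) ^ 2)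
      ≤ ∫ u in Ioi (0:ℝ), Real.exp (-Real.pi * x ^ 2) * Real.exp (-Real.pi * u ^ 2) := by
    refine setIntegral_mono_on (gauss_integrable.comp_add_right x).integrableOn
      (gauss_integrable.const_mul _).integrableOn measurableSet_Ioi ?_
    intro u hu
    rw [← Real.exp_add]
    apply Real.exp_le_exp.2
    nlinarith [mul_nonneg hu.le hx, Real.pi_pos]
  calc _ ≤ _ := this
    _ = Real.exp (-Real.pi * x ^ 2) * (1 / 2) := by
        rw [integral_const_mul, gauss_Ioi_zero]

lemma Efun_interval_eq {x : ℝ} (hx : 0 ≤ x) :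
    Efun x = 2 * ∫ u in Ioc (0:ℝ) x, Real.exp (-Real.pi * u ^ 2) := by
  unfold Efun
  rw [intervalIntegral.integral_of_le hx]

lemma one_sub_Efun {x : ℝ} (hx : 0 ≤ x) :
    1 - Efun x = 2 * ∫ u in Ioi x, Real.exp (-Real.pi * u ^ 2) := by
  rw [Efun_interval_eq hx]
  have := Ioi_split hx
  rw [gauss_Ioi_zero] at this
  linarith

lemma Efun_nonneg {x : ℝ} (hx : 0 ≤ x) : 0 ≤ Efun x := by
  rw [Efun_interval_eq hx]
  have := setIntegral_nonneg (measurableSet_Ioc) (fun u _ => (Real.exp_pos (-Real.pi * u^2)).le)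
    (f := fun u : ℝ => Real.exp (-Real.pi * u ^ 2)) (μ := volume) (s := Ioc (0:ℝ) x)
  linarith

lemma Efun_le_one {x : ℝ} (hx : 0 ≤ x) : Efun x ≤ 1 := by
  have h1 := one_sub_Efun hx
  have h2 := tail_nonneg x
  linarith

lemma abs_Efun_le_one (x : ℝ) : |Efun x| ≤ 1 := by
  rcases le_or_gt 0 x with hx | hx
  · rw [_root_.abs_of_nonneg (Efun_nonneg hx)]; exact Efun_le_one hx
  · have : Efun x = -Efun (-x) := by rw [Efun_neg, neg_neg]
    rw [this, abs_neg, _root_.abs_of_nonneg (Efun_nonneg (by linarith))]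
    exact Efun_le_one (by linarith)

lemma abs_sign_sub_Efun (x : ℝ) :
    |Real.sign x - Efun x| ≤ Real.exp (-Real.pi * x ^ 2) := by
  have key : ∀ y : ℝ, 0 < y → |Real.sign y - Efun y| ≤ Real.exp (-Real.pi * y ^ 2) := by
    intro y hy
    rw [Real.sign_of_pos hy, _root_.abs_of_nonneg (by linarith [Efun_le_one hy.le]),
      one_sub_Efun hy.le]
    have := tail_le hy.le
    linarith
  rcases lt_trichotomy x 0 with hx | hx | hx
  · have h := key (-x) (by linarith)
    rw [Real.sign_of_neg hx]
    have h2 : Real.sign (-x) - Efun (-x) = -(-1 - Efun x) := by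
      rw [Real.sign_of_pos (by linarith), Efun_neg]; ring
    rw [h2, abs_neg] at h
    simpa using h
  · subst hx
    simp [Real.sign_zero, Efun, (Real.exp_pos _).le]
  · exact key x hx

def RBterm (m : ℕ) (j : ℤ) (τ v : ℂ) (k : ℤ) : ℂ :=
  (-1 : ℂ) ^ ((2 * (m : ℤ) + 1) * k) *
    (((Real.sign ((j : ℝ) + 1 / 2 + (2 * (m : ℝ) + 1) * (k : ℝ)) -
        Efun ((((j : ℝ) + 1 / 2 + (2 * (m : ℝ) + 1) * (k : ℝ)) +
            (2 * (m : ℝ) + 1) * (v.im / τ.im)) *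
          Real.sqrt (τ.im / ((m : ℝ) + 1 / 2)))) : ℝ) : ℂ) *
    Complex.exp (-(Real.pi : ℂ) * I * ((j : ℂ) + 1 / 2 + (2 * (m : ℂ) + 1) * (k : ℂ)) ^ 2 * τ /
        (2 * (m : ℂ) + 1) -
      2 * (Real.pi : ℂ) * I * ((j : ℂ) + 1 / 2 + (2 * (m : ℂ) + 1) * (k : ℂ)) * v)

lemma RBterm_norm (m : ℕ) (j : ℤ) (τ v : ℂ) (hτ : 0 < τ.im) (k : ℤ) :
    ‖RBterm m j τ v k‖ =
      |Real.sign ((j : ℝ) + 1 / 2 + (2 * (m : ℝ) + 1) * (k : ℝ)) -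
        Efun ((((j : ℝ) + 1 / 2 + (2 * (m : ℝ) + 1) * (k : ℝ)) +
            (2 * (m : ℝ) + 1) * (v.im / τ.im)) *
          Real.sqrt (τ.im / ((m : ℝ) + 1 / 2)))| *
      Real.exp (Real.pi * ((j : ℝ) + 1 / 2 + (2 * (m : ℝ) + 1) * (k : ℝ)) ^ 2 * τ.im /
          (2 * (m : ℝ) + 1)
        + 2 * Real.pi * ((j : ℝ) + 1 / 2 + (2 * (m : ℝ) + 1) * (k : ℝ)) * v.im) := by
  have hM0 : (0:ℝ) < 2 * (m:ℝ) + 1 := by positivity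
  have hMc : (2 * (m:ℂ) + 1) ≠ 0 := by
    intro h
    have := congrArg Complex.re h
    simp [Complex.add_re, Complex.mul_re] at this
    nlinarith [this, Nat.cast_nonneg (α := ℝ) m]
  rw [RBterm, norm_mul, norm_mul, norm_zpow, norm_neg, norm_one, one_zpow, one_mul]
  congr 1
  · rw [Complex.norm_real, Real.norm_eq_abs]
  · rw [Complex.norm_exp]
    congr 1
    have hz : -(Real.pi : ℂ) * I * ((j : ℂ) + 1 / 2 + (2 * (m : ℂ) + 1) * (k : ℂ)) ^ 2 * τ /
          (2 * (m : ℂ) + 1) -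
        2 * (Real.pi : ℂ) * I * ((j : ℂ) + 1 / 2 + (2 * (m : ℂ) + 1) * (k : ℂ)) * v
        = -(I * ((((Real.pi * ((j : ℝ) + 1 / 2 + (2 * (m : ℝ) + 1) * (k : ℝ)) ^ 2 /
            (2 * (m : ℝ) + 1) : ℝ)) : ℂ) * τ +
          (((2 * Real.pi * ((j : ℝ) + 1 / 2 + (2 * (m : ℝ) + 1) * (k : ℝ)) : ℝ)) : ℂ) * v)) := by
      push_cast
      field_simp
      ring
    rw [hz]
    simp only [Complex.neg_re, Complex.mul_re, Complex.I_re, Complex.I_im, Complex.add_re,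
      Complex.add_im, Complex.mul_im, Complex.ofReal_re, Complex.ofReal_im]
    ring

lemma abs_real_sign_le_one (x : ℝ) : |Real.sign x| ≤ 1 := by
  rcases lt_trichotomy x 0 with h | h | h
  · rw [Real.sign_of_neg h]; norm_num
  · subst h; rw [Real.sign_zero]; norm_num
  · rw [Real.sign_of_pos h]; norm_num

set_option maxHeartbeats 1000000 in
lemma RBterm_bound (m : ℕ) (j : ℤ) (τ v : ℂ) (hτ : 0 < τ.im) :
    ∃ K d : ℝ, 0 ≤ K ∧ ∀ k : ℤ, ‖RBterm m j τ v k‖ ≤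
      K * Real.exp (-(Real.pi * (τ.im * (2 * (m:ℝ) + 1))) * ((k : ℝ) + d) ^ 2) := by
  set t : ℝ := τ.im with ht_def
  set M : ℝ := 2 * (m:ℝ) + 1 with hM_def
  have hM0 : (0:ℝ) < M := by positivity
  set a : ℝ := (j : ℝ) + 1 / 2 with ha_def
  set w : ℝ := v.im / t with hw_def
  have hvim : v.im = w * t := by rw [hw_def]; field_simp
  set vi : ℝ := v.im with hvi_def
  set B : ℝ := Real.pi * t / M * (M * w) ^ 2 + 2 * Real.pi * (M * |w|) * |vi| with hB_def
  set K : ℝ := 2 * Real.exp (B + Real.pi * t / M * (M * w) ^ 2) with hK_def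
  have hptM : (0:ℝ) ≤ Real.pi * t / M := by positivity
  have hB0 : 0 ≤ B := by rw [hB_def]; positivity
  have hK1 : 1 ≤ K := by
    rw [hK_def]
    have h1 : (1:ℝ) ≤ Real.exp (B + Real.pi * t / M * (M * w) ^ 2) := by
      rw [Real.one_le_exp_iff]; positivity
    linarith
  refine ⟨K, a / M + w, by linarith, fun k => ?_⟩
  set n : ℝ := a + M * (k : ℝ) with hn_def
  set c : ℝ := Real.sqrt (t / ((m : ℝ) + 1 / 2)) with hc_def
  have hsq : c ^ 2 = 2 * t / M := by
    rw [hc_def, Real.sq_sqrt (by positivity : (0:ℝ) ≤ t / ((m : ℝ) + 1 / 2))]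
    rw [hM_def]; field_simp
  have hsqpos : 0 < c := by
    rw [hc_def]; exact Real.sqrt_pos.mpr (by positivity)
  set X : ℝ := (n + M * w) * c with hX_def
  set R : ℝ := Real.pi * n ^ 2 * t / M + 2 * Real.pi * n * vi with hR_def
  have hnorm : ‖RBterm m j τ v k‖ = |Real.sign n - Efun X| * Real.exp R := by
    rw [hX_def, hc_def, hR_def, hn_def, hvi_def, hw_def, ha_def, hM_def, ht_def]
    exact RBterm_norm m j τ v hτ k
  have hXsq : X ^ 2 = (n + M * w) ^ 2 * (2 * t / M) := by
    rw [hX_def, mul_pow, hsq]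
  have htarget : -(Real.pi * (t * M)) * ((k : ℝ) + (a / M + w)) ^ 2
      = -(Real.pi * t / M) * (n + M * w) ^ 2 := by
    have h2 : ((k : ℝ) + (a / M + w)) = (n + M * w) / M := by
      rw [hn_def]; field_simp; ring
    rw [h2]; field_simp
  have hE1 : -Real.pi * X ^ 2 + R = -(Real.pi * t / M) * ((n + M * w) ^ 2 + (M * w) ^ 2) := by
    rw [hXsq, hR_def, hvim]; field_simp; ring
  clear_value X R c n K B vi w a M t
  clear hXsq hsq hc_def hn_def hvi_def hw_def ha_def hM_def ht_def hvim
  rw [hnorm]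
  rcases lt_or_ge 0 (n * (n + M * w)) with hcase | hcase
  · -- signs agree: Gaussian bound
    have hEbound : |Real.sign n - Efun X| ≤ Real.exp (-Real.pi * X ^ 2) := by
      rcases mul_pos_iff.mp hcase with ⟨hn, hx⟩ | ⟨hn, hx⟩
      · have hX0 : 0 < X := by rw [hX_def]; exact mul_pos hx hsqpos
        rw [Real.sign_of_pos hn, ← Real.sign_of_pos hX0]
        exact abs_sign_sub_Efun X
      · have hX0 : X < 0 := by rw [hX_def]; exact mul_neg_of_neg_of_pos hx hsqpos
        rw [Real.sign_of_neg hn, ← Real.sign_of_neg hX0]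
        exact abs_sign_sub_Efun X
    calc |Real.sign n - Efun X| * Real.exp R
        ≤ Real.exp (-Real.pi * X ^ 2) * Real.exp R :=
          mul_le_mul_of_nonneg_right hEbound (Real.exp_pos R).le
      _ = Real.exp (-Real.pi * X ^ 2 + R) := (Real.exp_add _ _).symm
      _ ≤ Real.exp (-(Real.pi * (t * M)) * ((k : ℝ) + (a / M + w)) ^ 2) := by
          rw [Real.exp_le_exp, hE1, htarget]
          have hprod : 0 ≤ Real.pi * t / M * (M * w) ^ 2 := mul_nonneg hptM (sq_nonneg _)
          have hexpand : -(Real.pi * t / M) * ((n + M * w) ^ 2 + (M * w) ^ 2)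
              = -(Real.pi * t / M) * (n + M * w) ^ 2 - Real.pi * t / M * (M * w) ^ 2 := by
            ring
          rw [hexpand]
          linarith
      _ ≤ K * Real.exp (-(Real.pi * (t * M)) * ((k : ℝ) + (a / M + w)) ^ 2) :=
          le_mul_of_one_le_left (Real.exp_pos _).le hK1
  · -- mismatch region: crude bound
    have h1 : n ^ 2 ≤ (M * w) ^ 2 := by nlinarith [sq_nonneg (n + M * w)]
    have h2 : (n + M * w) ^ 2 ≤ (M * w) ^ 2 := by nlinarith [sq_nonneg n]
    have habsn : |n| ≤ M * |w| := by
      have h3 := Real.sqrt_le_sqrt h1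
      rwa [Real.sqrt_sq_eq_abs, Real.sqrt_sq_eq_abs, abs_mul, abs_of_pos hM0] at h3
    have hsE : |Real.sign n - Efun X| ≤ 2 := by
      have hs1 := abs_real_sign_le_one n
      have hs2 := abs_Efun_le_one X
      calc |Real.sign n - Efun X| = |Real.sign n + -Efun X| := by rw [sub_eq_add_neg]
        _ ≤ |Real.sign n| + |-Efun X| := abs_add_le _ _
        _ = |Real.sign n| + |Efun X| := by rw [abs_neg]
        _ ≤ 2 := by linarith
    have hR_le : R ≤ B := by
      rw [hR_def, hB_def]
      have hterm1 : Real.pi * n ^ 2 * t / M ≤ Real.pi * t / M * (M * w) ^ 2 := by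
        have he : Real.pi * n ^ 2 * t / M = Real.pi * t / M * n ^ 2 := by ring
        rw [he]
        exact mul_le_mul_of_nonneg_left h1 hptM
      have hterm2 : 2 * Real.pi * n * vi ≤ 2 * Real.pi * (M * |w|) * |vi| := by
        calc 2 * Real.pi * n * vi ≤ |2 * Real.pi * n * vi| := le_abs_self _
          _ = 2 * Real.pi * |n| * |vi| := by
              rw [abs_mul, abs_mul, abs_of_pos (by positivity : (0:ℝ) < 2 * Real.pi)]
          _ ≤ 2 * Real.pi * (M * |w|) * |vi| := by
              gcongr
      linarith
    have step1 : |Real.sign n - Efun X| * Real.exp R ≤ 2 * Real.exp B := by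
      have hR2 := Real.exp_le_exp.2 hR_le
      have h0 := abs_nonneg (Real.sign n - Efun X)
      have he1 := Real.exp_pos R
      nlinarith
    refine step1.trans ?_
    rw [htarget, hK_def, mul_assoc, ← Real.exp_add]
    rw [show B + Real.pi * t / M * (M * w) ^ 2 + -(Real.pi * t / M) * (n + M * w) ^ 2
        = B + Real.pi * t / M * ((M * w) ^ 2 - (n + M * w) ^ 2) by ring]
    have hge : B ≤ B + Real.pi * t / M * ((M * w) ^ 2 - (n + M * w) ^ 2) := by
      have := mul_nonneg hptM (by linarith : (0:ℝ) ≤ (M * w) ^ 2 - (n + M * w) ^ 2)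
      linarith
    have h5 := Real.exp_le_exp.2 hge
    linarith

lemma summable_RBterm (m : ℕ) (j : ℤ) (τ v : ℂ) (hτ : 0 < τ.im) :
    Summable (RBterm m j τ v) := by
  obtain ⟨K, d, hK0, hK⟩ := RBterm_bound m j τ v hτ
  set T : ℝ := τ.im * (2 * (m:ℝ) + 1) with hT_def
  have hT0 : 0 < T := by positivity
  have hsum := (summable_pow_mul_jacobiTheta₂_term_bound (T * |d|) hT0 0).mul_left K
  apply Summable.of_norm_bounded hsum
  intro k
  refine (hK k).trans ?_
  apply mul_le_mul_of_nonneg_left ?_ hK0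
  rw [pow_zero, one_mul, Real.exp_le_exp]
  have habs : -(|(k:ℝ)| * |d|) ≤ (k:ℝ) * d := by
    rw [← abs_mul]; exact neg_abs_le _
  rw [show -(Real.pi * T) * ((k:ℝ) + d) ^ 2 = -Real.pi * (T * ((k:ℝ) + d) ^ 2) by ring,
    show -Real.pi * (T * (k:ℝ) ^ 2 - 2 * (T * |d|) * |(k:ℤ)|) =
      -Real.pi * (T * ((k:ℝ) ^ 2 - 2 * |d| * |(k:ℝ)|)) by push_cast; ring]
  have hinner : (k:ℝ) ^ 2 - 2 * |d| * |(k:ℝ)| ≤ ((k:ℝ) + d) ^ 2 := by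
    nlinarith [sq_nonneg d, habs]
  nlinarith [Real.pi_pos, mul_le_mul_of_nonneg_left hinner hT0.le]

lemma RBterm_shift (m : ℕ) (j : ℤ) (hj0 : 0 ≤ j) (hj1 : j ≤ 2 * (m : ℤ)) (τ v : ℂ)
    (hτ : 0 < τ.im) (k : ℤ) :
    RBterm m j τ (v - τ) k =
      -Complex.exp ((Real.pi : ℂ) * I * (2 * (m : ℂ) + 1) * (τ - 2 * v)) *
          RBterm m j τ v (k - 1) +
      (if k = 0 then
        2 * Complex.exp (-(Real.pi : ℂ) * I * τ * ((j : ℂ) + 1 / 2) ^ 2 / (2 * (m : ℂ) + 1) +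
            2 * (Real.pi : ℂ) * I * τ * ((j : ℂ) + 1 / 2)) *
          Complex.exp (-(2 * (Real.pi : ℂ) * I) * ((j : ℂ) + 1 / 2) * v)
      else 0) := by
  have ht : τ.im ≠ 0 := hτ.ne'
  have hM0 : (0:ℝ) < 2 * (m:ℝ) + 1 := by positivity
  have hMc : (2 * (m:ℂ) + 1) ≠ 0 := by
    intro h
    have h2 := congrArg Complex.re h
    simp [Complex.add_re, Complex.mul_re] at h2
    nlinarith [h2, Nat.cast_nonneg (α := ℝ) m]
  have hjr0 : (0:ℝ) ≤ (j:ℝ) := by exact_mod_cast hj0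
  have hjr1 : (j:ℝ) ≤ 2 * (m:ℝ) := by exact_mod_cast hj1
  have hm0 : (0:ℝ) ≤ (m:ℝ) := Nat.cast_nonneg m
  have e1 : (v - τ).im = v.im - τ.im := by simp
  have e2 : ((j:ℝ) + 1 / 2 + (2 * (m:ℝ) + 1) * (k:ℝ)) +
        (2 * (m:ℝ) + 1) * ((v.im - τ.im) / τ.im)
      = ((j:ℝ) + 1 / 2 + (2 * (m:ℝ) + 1) * ((k - 1 : ℤ):ℝ)) +
        (2 * (m:ℝ) + 1) * (v.im / τ.im) := by
    push_cast
    field_simp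
    ring
  have hodd : (-1:ℂ) ^ (2 * (m:ℤ) + 1) = -1 := by
    rw [zpow_add₀ (by norm_num : (-1:ℂ) ≠ 0), zpow_one, zpow_mul]
    norm_num
  have e4 : (-1:ℂ) ^ ((2 * (m:ℤ) + 1) * k) = -(-1:ℂ) ^ ((2 * (m:ℤ) + 1) * (k - 1)) := by
    have h : (2 * (m:ℤ) + 1) * k = (2 * (m:ℤ) + 1) * (k - 1) + (2 * (m:ℤ) + 1) := by ring
    rw [h, zpow_add₀ (by norm_num : (-1:ℂ) ≠ 0), hodd]
    ring
  have e5 : Complex.exp (-(Real.pi : ℂ) * I * ((j : ℂ) + 1 / 2 + (2 * (m : ℂ) + 1) * (k : ℂ)) ^ 2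
          * τ / (2 * (m : ℂ) + 1) -
        2 * (Real.pi : ℂ) * I * ((j : ℂ) + 1 / 2 + (2 * (m : ℂ) + 1) * (k : ℂ)) * (v - τ))
      = Complex.exp ((Real.pi : ℂ) * I * (2 * (m : ℂ) + 1) * (τ - 2 * v)) *
        Complex.exp (-(Real.pi : ℂ) * I *
            ((j : ℂ) + 1 / 2 + (2 * (m : ℂ) + 1) * ((k - 1 : ℤ) : ℂ)) ^ 2 * τ /
            (2 * (m : ℂ) + 1) -
          2 * (Real.pi : ℂ) * I * ((j : ℂ) + 1 / 2 + (2 * (m : ℂ) + 1) * ((k - 1 : ℤ) : ℂ)) * v)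
      := by
    rw [← Complex.exp_add]
    congr 1
    push_cast
    field_simp
    ring
  rcases eq_or_ne k 0 with rfl | hk
  · simp only [if_pos rfl]
    have s0 : Real.sign ((j:ℝ) + 1 / 2 + (2 * (m:ℝ) + 1) * (((0:ℤ)):ℝ)) = 1 :=
      Real.sign_of_pos (by push_cast; linarith)
    have s1 : Real.sign ((j:ℝ) + 1 / 2 + (2 * (m:ℝ) + 1) * (((0:ℤ) - 1 : ℤ):ℝ)) = -1 :=
      Real.sign_of_neg (by push_cast; linarith)
    have hA0 : (-1:ℂ) ^ ((2 * (m:ℤ) + 1) * ((0:ℤ) - 1)) = -1 := by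
      have h : (2 * (m:ℤ) + 1) * ((0:ℤ) - 1) = -(2 * (m:ℤ) + 1) := by ring
      rw [h, zpow_neg, hodd]
      norm_num
    have hA1 : (-1:ℂ) ^ ((2 * (m:ℤ) + 1) * (0:ℤ)) = 1 := by
      rw [mul_zero, zpow_zero]
    have e6 : Complex.exp ((Real.pi : ℂ) * I * (2 * (m : ℂ) + 1) * (τ - 2 * v)) *
          Complex.exp (-(Real.pi : ℂ) * I *
              ((j : ℂ) + 1 / 2 + (2 * (m : ℂ) + 1) * (((0:ℤ) - 1 : ℤ) : ℂ)) ^ 2 * τ /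
              (2 * (m : ℂ) + 1) -
            2 * (Real.pi : ℂ) * I *
              ((j : ℂ) + 1 / 2 + (2 * (m : ℂ) + 1) * (((0:ℤ) - 1 : ℤ) : ℂ)) * v)
        = Complex.exp (-(Real.pi : ℂ) * I * τ * ((j : ℂ) + 1 / 2) ^ 2 / (2 * (m : ℂ) + 1) +
            2 * (Real.pi : ℂ) * I * τ * ((j : ℂ) + 1 / 2)) *
          Complex.exp (-(2 * (Real.pi : ℂ) * I) * ((j : ℂ) + 1 / 2) * v) := by
      rw [← Complex.exp_add, ← Complex.exp_add]
      congr 1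
      push_cast
      field_simp
      ring
    simp only [RBterm]
    rw [e1, e2, s0, s1, e5, hA0, hA1]
    rw [show (2 : ℂ) * Complex.exp (-(Real.pi : ℂ) * I * τ * ((j : ℂ) + 1 / 2) ^ 2 /
            (2 * (m : ℂ) + 1) + 2 * (Real.pi : ℂ) * I * τ * ((j : ℂ) + 1 / 2)) *
          Complex.exp (-(2 * (Real.pi : ℂ) * I) * ((j : ℂ) + 1 / 2) * v)
        = 2 * (Complex.exp (-(Real.pi : ℂ) * I * τ * ((j : ℂ) + 1 / 2) ^ 2 / (2 * (m : ℂ) + 1) +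
            2 * (Real.pi : ℂ) * I * τ * ((j : ℂ) + 1 / 2)) *
          Complex.exp (-(2 * (Real.pi : ℂ) * I) * ((j : ℂ) + 1 / 2) * v)) from by ring, ← e6]
    push_cast
    ring
  · simp only [if_neg hk, add_zero]
    have e3 : Real.sign ((j:ℝ) + 1 / 2 + (2 * (m:ℝ) + 1) * (k:ℝ))
        = Real.sign ((j:ℝ) + 1 / 2 + (2 * (m:ℝ) + 1) * ((k - 1 : ℤ):ℝ)) := by
      rcases lt_or_ge 0 k with hk1 | hk1
      · have hk1' : (1:ℝ) ≤ (k:ℝ) := by exact_mod_cast hk1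
        rw [Real.sign_of_pos (by nlinarith), Real.sign_of_pos (by push_cast; nlinarith)]
      · have hk0 : k ≤ -1 := by omega
        have hk1' : (k:ℝ) ≤ -1 := by exact_mod_cast hk0
        rw [Real.sign_of_neg (by nlinarith), Real.sign_of_neg (by push_cast; nlinarith)]
    simp only [RBterm]
    rw [e1, e2, e3, e4, e5]
    ring

lemma RB_eq_tsum (m : ℕ) (j : ℤ) (τ v : ℂ) : RB m j τ v = ∑' k : ℤ, RBterm m j τ v k := rfl


/-- For `0 ≤ j ≤ 2m`:
`R^{[B]}_{j+1/2,m+1/2}(τ, v−τ) = −e^{πi(2m+1)(τ−2v)} R^{[B]}_{j+1/2,m+1/2}(τ,v)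
 + 2 e^{−πiτ(j+1/2)²/(2m+1) + 2πiτ(j+1/2)} e^{−2πi(j+1/2)v}`. -/
theorem stmt16 (m : ℕ) (j : ℤ) (hj0 : 0 ≤ j) (hj1 : j ≤ 2 * (m : ℤ))
    (τ v : ℂ) (hτ : 0 < τ.im) :
    RB m j τ (v - τ) =
      -Complex.exp ((Real.pi : ℂ) * I * (2 * (m : ℂ) + 1) * (τ - 2 * v)) * RB m j τ v +
        2 * Complex.exp (-(Real.pi : ℂ) * I * τ * ((j : ℂ) + 1 / 2) ^ 2 / (2 * (m : ℂ) + 1) +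
            2 * (Real.pi : ℂ) * I * τ * ((j : ℂ) + 1 / 2)) *
          Complex.exp (-(2 * (Real.pi : ℂ) * I) * ((j : ℂ) + 1 / 2) * v) := by
  set C : ℂ := Complex.exp ((Real.pi : ℂ) * I * (2 * (m : ℂ) + 1) * (τ - 2 * v)) with hC_def
  set T0 : ℂ :=
    2 * Complex.exp (-(Real.pi : ℂ) * I * τ * ((j : ℂ) + 1 / 2) ^ 2 / (2 * (m : ℂ) + 1) +
        2 * (Real.pi : ℂ) * I * τ * ((j : ℂ) + 1 / 2)) *
      Complex.exp (-(2 * (Real.pi : ℂ) * I) * ((j : ℂ) + 1 / 2) * v) with hT0_def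
  have hsum : Summable (RBterm m j τ v) := summable_RBterm m j τ v hτ
  have hinj : Function.Injective (fun k : ℤ => k - 1) := fun x y h => by
    simpa using h
  have hs1 : Summable (fun k : ℤ => -C * RBterm m j τ v (k - 1)) :=
    Summable.mul_left _ (hsum.comp_injective hinj)
  have hs2 : Summable (fun k : ℤ => if k = 0 then T0 else 0) :=
    summable_of_ne_finset_zero (s := {0}) (fun k hk => if_neg (by simpa using hk))
  calc RB m j τ (v - τ) = ∑' k : ℤ, RBterm m j τ (v - τ) k := RB_eq_tsum m j τ (v - τ)
    _ = ∑' k : ℤ, (-C * RBterm m j τ v (k - 1) + (if k = 0 then T0 else 0)) :=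
        tsum_congr (fun k => RBterm_shift m j hj0 hj1 τ v hτ k)
    _ = (∑' k : ℤ, -C * RBterm m j τ v (k - 1)) + ∑' k : ℤ, (if k = 0 then T0 else 0) :=
        Summable.tsum_add hs1 hs2
    _ = -C * (∑' k : ℤ, RBterm m j τ v (k - 1)) + T0 := by
        rw [tsum_mul_left, tsum_ite_eq]
    _ = -C * RB m j τ v + T0 := by
        congr 1
        rw [RB_eq_tsum]
        congr 1
        have h := (Equiv.subRight (1:ℤ)).tsum_eq (RBterm m j τ v)
        simpa [Equiv.subRight] using h
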